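/- Let (s_n)_{n≥0} be a sequence of real numbers and let n₀ ≥ 0 be an integer. Assume that the Hankel determinants satisfy D_n > 0 for all n < n₀ and D_n = 0 for all n ≥ n₀. Then there exist real numbers x_1 < x_2 < … < x_{n₀} and positive reals m_1, …, m_{n₀} such that s_k = Σ_{j=1}^{n₀} m_j x_j^k for every k ≥ 0; that is, (s_n) is the moment sequence of a positive measure concentrated in exactly n₀ points of the real line. -/

import Mathlib

open Matrix BigOperators Finset

private lemma sum_support_emb {α β M : Type*} [Fintype α] [Fintype β] [DecidableEq β]
    [AddCommMonoid M] (g : β → M) (φ : α ↪ β) (h : ∀ b, (∀ a, φ a ≠ b) → g b = 0) :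
    ∑ b, g b = ∑ a, g (φ a) := by
  rw [← Finset.sum_map Finset.univ φ g]
  refine (Finset.sum_subset (Finset.subset_univ _) ?_).symm
  intro b _ hb
  refine h b fun a hab => hb ?_
  rw [Finset.mem_map]
  exact ⟨a, Finset.mem_univ a, hab⟩

private lemma keyE (s : ℕ → ℝ) (n₀ : ℕ) (c : Fin n₀ → ℝ) (k : ℕ) (hk : n₀ ≤ k)
    (hD : (Matrix.of fun i j : Fin n₀ => s (i.1 + j.1)).det ≠ 0)
    (hdet : (Matrix.of fun i j : Fin (k + 1) => s (i.1 + j.1)).det = 0)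
    (hE : ∀ t < k, s (n₀ + t) - ∑ l, c l * s (t + l.1) = 0) :
    s (n₀ + k) - ∑ l, c l * s (k + l.1) = 0 := by
  set E : ℕ → ℝ := fun t => s (n₀ + t) - ∑ l, c l * s (t + l.1) with hEdef
  have hE' : ∀ t, t < k → E t = 0 := hE
  show E k = 0
  set H : Matrix (Fin (k + 1)) (Fin (k + 1)) ℝ := Matrix.of fun i j => s (i.1 + j.1) with hH
  set T : Matrix (Fin (k + 1)) (Fin (k + 1)) ℝ := Matrix.of fun i j =>
      if i = j then (1 : ℝ) else
        if h : n₀ ≤ i.1 ∧ j.1 < i.1 ∧ i.1 ≤ j.1 + n₀ then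
          -c ⟨j.1 + n₀ - i.1, by omega⟩ else 0 with hT
  -- generic row-operation computation
  have hb : ∀ (r : Fin (k+1)) (l : Fin n₀), r.1 - n₀ + l.1 < k + 1 := by
    intro r l; have := r.2; have := l.2; omega
  have Tsum : ∀ (r : Fin (k + 1)) (v : Fin (k + 1) → ℝ),
      ∑ a, T r a * v a
        = v r - (if n₀ ≤ r.1 then ∑ l : Fin n₀, c l * v ⟨r.1 - n₀ + l.1, hb r l⟩ else 0) := by
    intro r v
    have hsplit : ∀ a : Fin (k+1), T r a * v a =
        (if r = a then v a else 0) +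
        (if h : n₀ ≤ r.1 ∧ a.1 < r.1 ∧ r.1 ≤ a.1 + n₀ then
          (-c ⟨a.1 + n₀ - r.1, by omega⟩) * v a else 0) := by
      intro a
      by_cases hra : r = a
      · subst hra
        have hnc : ¬(n₀ ≤ r.1 ∧ r.1 < r.1 ∧ r.1 ≤ r.1 + n₀) := by omega
        simp only [hT, Matrix.of_apply, if_pos rfl, dif_neg hnc]
        simp
      · simp only [hT, Matrix.of_apply, if_neg hra]
        by_cases hc : n₀ ≤ r.1 ∧ a.1 < r.1 ∧ r.1 ≤ a.1 + n₀
        · rw [dif_pos hc, dif_pos hc]; ring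
        · rw [dif_neg hc, dif_neg hc]; ring
    rw [Finset.sum_congr rfl fun a _ => hsplit a, Finset.sum_add_distrib]
    have h1 : ∑ a : Fin (k+1), (if r = a then v a else 0) = v r := by simp
    rw [h1]
    by_cases hr : n₀ ≤ r.1
    · rw [if_pos hr, sub_eq_add_neg]
      congr 1
      have hφinj : Function.Injective
          (fun l : Fin n₀ => (⟨r.1 - n₀ + l.1, hb r l⟩ : Fin (k+1))) := by
        intro a b hab
        have : r.1 - n₀ + a.1 = r.1 - n₀ + b.1 := congrArg Fin.val hab
        exact Fin.ext (by omega)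
      rw [sum_support_emb _ ⟨_, hφinj⟩ ?_, ← Finset.sum_neg_distrib]
      · refine Finset.sum_congr rfl fun l _ => ?_
        simp only [Function.Embedding.coeFn_mk, Fin.val_mk]
        rw [dif_pos ⟨hr, by omega, by omega⟩]
        have hl : (⟨r.1 - n₀ + l.1 + n₀ - r.1, by omega⟩ : Fin n₀) = l := Fin.ext (by simp only [Fin.val_mk]; omega)
        rw [hl]; ring
      · intro b hbn
        rw [dif_neg]
        intro hcond
        refine hbn ⟨b.1 + n₀ - r.1, by omega⟩ (Fin.ext ?_)
        simp only [Function.Embedding.coeFn_mk, Fin.val_mk]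
        omega
    · rw [if_neg hr, sub_zero]
      have h2 : ∑ a : Fin (k+1),
          (if h : n₀ ≤ r.1 ∧ a.1 < r.1 ∧ r.1 ≤ a.1 + n₀ then
            (-c ⟨a.1 + n₀ - r.1, by omega⟩) * v a else 0) = 0 :=
        Finset.sum_eq_zero fun a _ => dif_neg (fun hcond => hr hcond.1)
      rw [h2, add_zero]
  -- entries of T * H
  have hTH : ∀ i j : Fin (k + 1), (T * H) i j
      = if n₀ ≤ i.1 then E (i.1 + j.1 - n₀) else s (i.1 + j.1) := by
    intro i j
    rw [Matrix.mul_apply, Tsum i (fun a => H a j)]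
    by_cases hi : n₀ ≤ i.1
    · rw [if_pos hi, if_pos hi, hEdef]
      simp only [hH, Matrix.of_apply]
      have h1 : n₀ + (i.1 + j.1 - n₀) = i.1 + j.1 := by omega
      rw [h1]
      congr 1
      refine Finset.sum_congr rfl fun l _ => ?_
      congr 2
      omega
    · rw [if_neg hi, if_neg hi, sub_zero]; rfl
  set M : Matrix (Fin (k + 1)) (Fin (k + 1)) ℝ := T * H * Tᵀ with hM
  -- entries of M
  have hMapp : ∀ i j : Fin (k + 1), M i j
      = (T * H) i j - (if n₀ ≤ j.1 then
          ∑ l : Fin n₀, c l * (T * H) i ⟨j.1 - n₀ + l.1, hb j l⟩ else 0) := by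
    intro i j
    rw [hM, Matrix.mul_apply]
    have : ∀ b, (T * H) i b * Tᵀ b j = T j b * (fun b => (T * H) i b) b := by
      intro b; simp [Matrix.transpose_apply]; ring
    rw [Finset.sum_congr rfl fun b _ => this b, Tsum j (fun b => (T * H) i b)]
  -- structural facts
  have fact_zero : ∀ i j : Fin (k + 1), n₀ ≤ j.1 → i.1 + j.1 < k + n₀ → M i j = 0 := by
    intro i j hj hij
    rw [hMapp i j, if_pos hj]
    by_cases hi : n₀ ≤ i.1
    · rw [hTH i j, if_pos hi, hE' _ (by omega)]
      rw [Finset.sum_eq_zero, sub_zero]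
      intro l _
      rw [hTH, if_pos hi]
      simp only
      rw [hE' _ (by omega)]
      ring
    · rw [hTH i j, if_neg hi]
      have : ∀ l : Fin n₀, c l * (T * H) i ⟨j.1 - n₀ + l.1, hb j l⟩
          = c l * s ((i.1 + j.1 - n₀) + l.1) := by
        intro l
        rw [hTH, if_neg hi]
        simp only
        congr 2
        omega
      rw [Finset.sum_congr rfl fun l _ => this l]
      have := hE (i.1 + j.1 - n₀) (by omega)
      have h1 : n₀ + (i.1 + j.1 - n₀) = i.1 + j.1 := by omega
      rw [h1] at this
      linarith
  have fact_diag : ∀ i j : Fin (k + 1), i.1 + j.1 = k + n₀ → M i j = E k := by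
    intro i j hij
    have hj : n₀ ≤ j.1 := by have := i.2; omega
    have hi : n₀ ≤ i.1 := by have := j.2; omega
    rw [hMapp i j, if_pos hj, hTH i j, if_pos hi]
    have h1 : i.1 + j.1 - n₀ = k := by omega
    rw [h1]
    rw [Finset.sum_eq_zero, sub_zero]
    intro l _
    rw [hTH, if_pos hi]
    simp only
    rw [hE' _ (by omega)]
    ring
  have fact_tl : ∀ i j : Fin (k + 1), i.1 < n₀ → j.1 < n₀ → M i j = s (i.1 + j.1) := by
    intro i j hi hj
    rw [hMapp i j, if_neg (by omega), sub_zero, hTH i j, if_neg (by omega)]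
  -- determinants
  have hTdet : T.det = 1 := by
    have htri : T.BlockTriangular OrderDual.toDual := by
      intro i j hij
      simp only [OrderDual.toDual_lt_toDual] at hij
      simp only [hT, Matrix.of_apply]
      rw [if_neg (by exact fun h => absurd h (by simp [Fin.ext_iff]; omega)), dif_neg (by omega)]
    rw [Matrix.det_of_lowerTriangular T htri]
    simp [hT]
  have hMdet : M.det = 0 := by
    rw [hM, Matrix.det_mul, Matrix.det_mul, Matrix.det_transpose, hTdet, hdet]
    ring
  -- block structure
  have hkk : n₀ + (k + 1 - n₀) = k + 1 := by omega
  set eqv : Fin n₀ ⊕ Fin (k + 1 - n₀) ≃ Fin (k + 1) :=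
    finSumFinEquiv.trans (finCongr hkk) with heqv
  have heqvl : ∀ p : Fin n₀, (eqv (Sum.inl p)).1 = p.1 := by
    intro p; simp [heqv, finSumFinEquiv]
  have heqvr : ∀ q : Fin (k + 1 - n₀), (eqv (Sum.inr q)).1 = n₀ + q.1 := by
    intro q; simp [heqv, finSumFinEquiv]
  set W := M.submatrix eqv eqv with hW
  have hWdet : W.det = 0 := by rw [hW, Matrix.det_submatrix_equiv_self]; exact hMdet
  have h12 : W.toBlocks₁₂ = 0 := by
    ext p q
    simp only [Matrix.toBlocks₁₂, Matrix.of_apply, Matrix.zero_apply, hW, Matrix.submatrix_apply]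
    apply fact_zero
    · rw [heqvr]; omega
    · rw [heqvl, heqvr]; have := p.2; have := q.2; omega
  have hWblocks : W = Matrix.fromBlocks W.toBlocks₁₁ 0 W.toBlocks₂₁ W.toBlocks₂₂ := by
    conv_lhs => rw [← Matrix.fromBlocks_toBlocks W, h12]
  have hdet_split : W.det = W.toBlocks₁₁.det * W.toBlocks₂₂.det := by
    rw [hWblocks]
    exact Matrix.det_fromBlocks_zero₁₂ _ _ _
  have hW11 : W.toBlocks₁₁ = (Matrix.of fun i j : Fin n₀ => s (i.1 + j.1)) := by
    ext p q
    simp only [Matrix.toBlocks₁₁, Matrix.of_apply, hW, Matrix.submatrix_apply]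
    rw [fact_tl _ _ (by rw [heqvl]; exact p.2) (by rw [heqvl]; exact q.2), heqvl, heqvl]
  -- the lower-right block is anti-triangular with E k on the antidiagonal
  have hW22 : W.toBlocks₂₂.det = 0 := by
    rcases mul_eq_zero.mp (hdet_split ▸ hWdet) with h | h
    · exact absurd (hW11 ▸ h) hD
    · exact h
  -- compute det of W22 as ± (E k)^(k+1-n₀)
  have hrev : ((W.toBlocks₂₂).submatrix id Fin.rev).det = E k ^ (k + 1 - n₀) := by
    have htri : ((W.toBlocks₂₂).submatrix id Fin.rev).BlockTriangular OrderDual.toDual := by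
      intro p q hpq
      simp only [OrderDual.toDual_lt_toDual] at hpq
      simp only [Matrix.submatrix_apply, id_eq, Matrix.toBlocks₂₂, Matrix.of_apply, hW]
      apply fact_zero
      · rw [heqvr]; omega
      · rw [heqvr, heqvr]
        have hq := q.2; have hp := p.2
        have hr : (Fin.rev q).1 = k + 1 - n₀ - (q.1 + 1) := Fin.val_rev q
        have hpq' : p.1 < q.1 := hpq
        omega
    rw [Matrix.det_of_lowerTriangular _ htri]
    have : ∀ p : Fin (k + 1 - n₀),
        ((W.toBlocks₂₂).submatrix id Fin.rev) p p = E k := by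
      intro p
      simp only [Matrix.submatrix_apply, id_eq, Matrix.toBlocks₂₂, Matrix.of_apply, hW]
      apply fact_diag
      rw [heqvr, heqvr]
      have hp := p.2
      have hr : (Fin.rev p).1 = k + 1 - n₀ - (p.1 + 1) := Fin.val_rev p
      omega
    rw [Finset.prod_congr rfl fun p _ => this p, Finset.prod_const]
    simp
  have hpow : E k ^ (k + 1 - n₀) = 0 := by
    rw [← hrev]
    have h2 : ((W.toBlocks₂₂).submatrix id Fin.rev)
        = ((W.toBlocks₂₂).submatrix id Fin.revPerm) := rfl
    rw [h2, Matrix.det_permute' Fin.revPerm (W.toBlocks₂₂), hW22, mul_zero]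
  have hne : k + 1 - n₀ ≠ 0 := by omega
  exact pow_eq_zero_iff hne |>.mp hpow

private lemma posDef_of_posSemidef_det_ne_zero {n : ℕ} {A : Matrix (Fin n) (Fin n) ℝ}
    (h : A.PosSemidef) (hd : A.det ≠ 0) : A.PosDef := by
  refine Matrix.PosDef.of_dotProduct_mulVec_pos h.1 fun x hx => ?_
  rcases lt_or_eq_of_le (h.dotProduct_mulVec_nonneg x) with hlt | heq
  · exact hlt
  · exfalso
    have h0 : A *ᵥ x = 0 := (h.dotProduct_mulVec_zero_iff x).mp heq.symm
    apply hx
    have hinv : A⁻¹ *ᵥ (A *ᵥ x) = x := by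
      rw [Matrix.mulVec_mulVec, Matrix.nonsing_inv_mul _ (isUnit_iff_ne_zero.mpr hd), Matrix.one_mulVec]
    rw [← hinv, h0, Matrix.mulVec_zero]

private lemma posSemidef_fin_one (M : Matrix (Fin 1) (Fin 1) ℝ) (h : 0 ≤ M 0 0) :
    M.PosSemidef := by
  refine Matrix.PosSemidef.of_dotProduct_mulVec_nonneg ?_ ?_
  · ext i j
    fin_cases i; fin_cases j
    simp [Matrix.conjTranspose_apply]
  · intro x
    have hx : star x ⬝ᵥ M *ᵥ x = M 0 0 * (x 0 * x 0) := by
      simp [Matrix.mulVec, dotProduct, Fin.sum_univ_one]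
      ring
    rw [hx]
    exact mul_nonneg h (mul_self_nonneg _)

set_option maxHeartbeats 1600000 in
private lemma hankel_posDef : ∀ (n : ℕ) (s : ℕ → ℝ),
    (∀ m, m ≤ n → 0 < (Matrix.of fun i j : Fin (m + 1) => s (i.1 + j.1)).det) →
    (Matrix.of fun i j : Fin (n + 1) => s (i.1 + j.1)).PosDef := by
  intro n
  induction n with
  | zero =>
    intro s h
    have h0 : (0:ℝ) < s 0 := by
      have := h 0 le_rfl
      rwa [Matrix.det_fin_one] at this
    refine Matrix.PosDef.of_dotProduct_mulVec_pos ?_ ?_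
    · ext i j
      fin_cases i; fin_cases j
      simp
    · intro x hx
      have hx0 : x 0 ≠ 0 := fun h0 => hx (funext fun i => by fin_cases i; exact h0)
      have hdot : star x ⬝ᵥ (Matrix.of fun i j : Fin 1 => s (i.1 + j.1)) *ᵥ x
          = s 0 * (x 0 * x 0) := by
        simp [Matrix.mulVec, dotProduct, Fin.sum_univ_one]
        ring
      rw [hdot]
      exact mul_pos h0 (mul_self_pos.mpr hx0)
  | succ n ih =>
    intro s h
    set A : Matrix (Fin (n + 1)) (Fin (n + 1)) ℝ := Matrix.of fun i j => s (i.1 + j.1) with hA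
    have hApd : A.PosDef := ih s fun m hm => h m (Nat.le_succ_of_le hm)
    haveI : Invertible A := A.invertibleOfIsUnitDet (isUnit_iff_ne_zero.mpr hApd.det_pos.ne')
    set B : Matrix (Fin (n + 1)) (Fin 1) ℝ := Matrix.of fun i _ => s (i.1 + (n + 1)) with hB
    set D : Matrix (Fin 1) (Fin 1) ℝ := Matrix.of fun _ _ => s ((n + 1) + (n + 1)) with hD
    set e : Fin (n + 1) ⊕ Fin 1 ≃ Fin (n + 2) := finSumFinEquiv with he
    have hq0 : ∀ q : Fin 1, q.1 = 0 := fun q => by have := q.2; omega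
    have hblock : (Matrix.of fun i j : Fin (n + 2) => s (i.1 + j.1)).submatrix e e
        = Matrix.fromBlocks A B Bᴴ D := by
      ext i j
      rcases i with p | p <;> rcases j with q | q
      · simp only [Matrix.submatrix_apply, Matrix.of_apply, he,
          finSumFinEquiv_apply_left, Matrix.fromBlocks_apply₁₁,
          Fin.coe_castAdd, hA]
      · simp only [Matrix.submatrix_apply, Matrix.of_apply, he,
          finSumFinEquiv_apply_left, finSumFinEquiv_apply_right,
          Matrix.fromBlocks_apply₁₂, Fin.coe_castAdd, Fin.coe_natAdd, hB]
        congr 1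
        have := hq0 q; omega
      · simp only [Matrix.submatrix_apply, Matrix.of_apply, he,
          finSumFinEquiv_apply_left, finSumFinEquiv_apply_right,
          Matrix.fromBlocks_apply₂₁, Fin.coe_castAdd, Fin.coe_natAdd,
          Matrix.conjTranspose_apply, star_trivial, hB]
        congr 1
        have := hq0 p; omega
      · simp only [Matrix.submatrix_apply, Matrix.of_apply, he,
          finSumFinEquiv_apply_right, Matrix.fromBlocks_apply₂₂,
          Fin.coe_natAdd, hD]
        congr 1
        have := hq0 p; have := hq0 q; omega
    have hdet2 : (Matrix.fromBlocks A B Bᴴ D).det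
        = (Matrix.of fun i j : Fin (n + 2) => s (i.1 + j.1)).det := by
      rw [← hblock]
      exact Matrix.det_submatrix_equiv_self e _
    have hschur : (Matrix.fromBlocks A B Bᴴ D).det = A.det * (D - Bᴴ * A⁻¹ * B).det :=
      by rw [Matrix.det_fromBlocks₁₁, Matrix.invOf_eq_nonsing_inv]
    have hdpos : 0 < (D - Bᴴ * A⁻¹ * B).det := by
      have hbig := h (n + 1) le_rfl
      rw [← hdet2, hschur] at hbig
      nlinarith [hApd.det_pos]
    have hsd : (D - Bᴴ * A⁻¹ * B).PosSemidef := by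
      apply posSemidef_fin_one
      have hfo : (D - Bᴴ * A⁻¹ * B).det = (D - Bᴴ * A⁻¹ * B) 0 0 := Matrix.det_fin_one _
      rw [hfo] at hdpos; exact hdpos.le
    have hfb : (Matrix.fromBlocks A B Bᴴ D).PosSemidef :=
      (Matrix.PosDef.fromBlocks₁₁ B D hApd).mpr hsd
    have hps : (Matrix.of fun i j : Fin (n + 2) => s (i.1 + j.1)).PosSemidef := by
      rw [← Matrix.posSemidef_submatrix_equiv e, hblock]
      exact hfb
    exact posDef_of_posSemidef_det_ne_zero hps (h (n + 1) le_rfl).ne'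

set_option maxHeartbeats 1600000 in
/-- If the Hankel determinants of a real sequence satisfy `D n > 0` for `n < n₀`
and `D n = 0` for `n ≥ n₀`, then the sequence is the moment sequence of a positive
measure concentrated in exactly `n₀` points of the real line. -/
theorem moment_sequence_of_det_sign_pattern (s : ℕ → ℝ) (n₀ : ℕ)
    (hpos : ∀ n < n₀, 0 < (Matrix.of fun i j : Fin (n + 1) => s (i.1 + j.1)).det)
    (hzero : ∀ n ≥ n₀, (Matrix.of fun i j : Fin (n + 1) => s (i.1 + j.1)).det = 0) :
    ∃ (x : Fin n₀ → ℝ) (m : Fin n₀ → ℝ), StrictMono x ∧ (∀ j, 0 < m j) ∧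
      ∀ k : ℕ, s k = ∑ j, m j * x j ^ k := by
  classical
  rcases Nat.eq_zero_or_pos n₀ with hn0 | hn0
  · -- degenerate case : the sequence is identically zero
    subst hn0
    have hs : ∀ k, s k = 0 := by
      intro k
      induction k using Nat.strong_induction_on with
      | _ k ih =>
        have hD : (Matrix.of fun i j : Fin 0 => s (i.1 + j.1)).det ≠ 0 := by
          simp [Matrix.det_isEmpty]
        have h := keyE s 0 Fin.elim0 k (Nat.zero_le _) hD (hzero k (Nat.zero_le _))
          (fun t ht => by simpa using ih t ht)
        simpa using h
    exact ⟨Fin.elim0, Fin.elim0, fun a => a.elim0, fun j => j.elim0,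
      fun k => by simp [hs k]⟩
  · obtain ⟨N, rfl⟩ : ∃ N, n₀ = N + 1 := ⟨n₀ - 1, by omega⟩
    set H : Matrix (Fin (N + 1)) (Fin (N + 1)) ℝ := Matrix.of fun i j => s (i.1 + j.1) with hH
    have hHpd : H.PosDef := hankel_posDef N s fun m hm => hpos m (by omega)
    have hHdet : H.det ≠ 0 := hHpd.det_pos.ne'
    set c : Fin (N + 1) → ℝ := H⁻¹ *ᵥ (fun i => s ((N + 1) + i.1)) with hc
    -- the linear recurrence holds everywhere
    have hEall : ∀ t : ℕ, s ((N + 1) + t) - ∑ l, c l * s (t + l.1) = 0 := by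
      intro t
      induction t using Nat.strong_induction_on with
      | _ t ih =>
        rcases lt_or_ge t (N + 1) with ht | ht
        · have h1 : H *ᵥ c = fun i => s ((N + 1) + i.1) := by
            rw [hc, Matrix.mulVec_mulVec, Matrix.mul_nonsing_inv _
              (isUnit_iff_ne_zero.mpr hHdet), Matrix.one_mulVec]
          have h2 := congrFun h1 ⟨t, ht⟩
          simp only [Matrix.mulVec, dotProduct] at h2
          have h3 : ∑ l, c l * s (t + l.1) = ∑ l, H ⟨t, ht⟩ l * c l := by
            refine Finset.sum_congr rfl fun l _ => ?_
            rw [hH]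
            simp only [Matrix.of_apply]
            ring
          rw [h3, h2]
          simp
        · exact keyE s (N + 1) c t ht hHdet (hzero t ht) (fun u hu => ih u hu)
    -- companion matrix
    set C : Matrix (Fin (N + 1)) (Fin (N + 1)) ℝ := Matrix.of fun i j =>
      if (j : ℕ) + 1 < N + 1 then (if (i : ℕ) = (j : ℕ) + 1 then 1 else 0) else c i with hCdef
    -- H * C^k has entries s (i + j + k)
    have hHC : ∀ k : ℕ, ∀ i j : Fin (N + 1), (H * C ^ k) i j = s (i.1 + j.1 + k) := by
      intro k
      induction k with
      | zero =>
        intro i j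
        rw [pow_zero, mul_one, hH]
        simp
      | succ k ihk =>
        intro i j
        rw [pow_succ, ← Matrix.mul_assoc, Matrix.mul_apply]
        by_cases hj : (j : ℕ) + 1 < N + 1
        · rw [Finset.sum_eq_single (⟨(j : ℕ) + 1, hj⟩ : Fin (N + 1))]
          · rw [ihk, hCdef]
            simp only [Matrix.of_apply, Fin.val_mk, if_pos hj, if_pos rfl, if_true, mul_one]
            congr 1
            omega
          · intro b _ hb
            rw [hCdef]
            simp only [Matrix.of_apply, if_pos hj]
            rw [if_neg (fun hbv => hb (Fin.ext (by simpa using hbv))), mul_zero]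
          · intro hmem
            exact absurd (Finset.mem_univ _) hmem
        · have h4 : ∀ b : Fin (N + 1), (H * C ^ k) i b * C b j = s ((i.1 + k) + b.1) * c b := by
            intro b
            rw [ihk, hCdef]
            simp only [Matrix.of_apply, if_neg hj]
            congr 2
            omega
          rw [Finset.sum_congr rfl fun b _ => h4 b]
          have h5 := hEall (i.1 + k)
          have h6 : ∑ l, c l * s ((i.1 + k) + l.1) = s ((N + 1) + (i.1 + k)) := by linarith
          have h7 : ∑ b, s ((i.1 + k) + b.1) * c b = ∑ l, c l * s ((i.1 + k) + l.1) :=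
            Finset.sum_congr rfl fun b _ => by ring
          rw [h7, h6]
          congr 1
          have hjN : (j : ℕ) = N := by have := j.2; omega
          omega
    have hs0 : ∀ k : ℕ, s k = (H * C ^ k) 0 0 := by
      intro k
      rw [hHC k 0 0]
      norm_num
    -- factor H = Rᴴ * R with R invertible
    obtain ⟨R, hR⟩ : ∃ R : Matrix (Fin (N + 1)) (Fin (N + 1)) ℝ, H = Rᴴ * R := by
      open MatrixOrder in exact CStarAlgebra.nonneg_iff_eq_star_mul_self.mp hHpd.posSemidef.nonneg
    have hRdet : R.det ≠ 0 := by
      intro h0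
      apply hHdet
      rw [hR, Matrix.det_mul, Matrix.det_conjTranspose, h0]
      simp
    haveI : Invertible R := R.invertibleOfIsUnitDet (isUnit_iff_ne_zero.mpr hRdet)
    set A : Matrix (Fin (N + 1)) (Fin (N + 1)) ℝ := R * C * ⅟R with hAdef
    have hAR : A * R = R * C := by
      rw [hAdef, Matrix.mul_assoc, invOf_mul_self, Matrix.mul_one]
    have hAkR : ∀ k : ℕ, A ^ k * R = R * C ^ k := by
      intro k
      induction k with
      | zero => simp
      | succ k ihk =>
        calc A ^ (k + 1) * R = A ^ k * (A * R) := by rw [pow_succ, Matrix.mul_assoc]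
          _ = A ^ k * (R * C) := by rw [hAR]
          _ = (A ^ k * R) * C := by rw [Matrix.mul_assoc]
          _ = (R * C ^ k) * C := by rw [ihk]
          _ = R * C ^ (k + 1) := by rw [pow_succ, Matrix.mul_assoc]
    -- A is symmetric
    have hHherm : Hᴴ = H := by
      ext i j
      rw [hH, Matrix.conjTranspose_apply]
      simp only [Matrix.of_apply, star_trivial]
      congr 1
      omega
    have hHCherm : (H * C)ᴴ = H * C := by
      ext i j
      rw [Matrix.conjTranspose_apply]
      have e1 := hHC 1 i j
      have e2 := hHC 1 j i
      rw [pow_one] at e1 e2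
      rw [e1, e2, star_trivial]
      congr 1
      omega
    have hCH : Cᴴ * H = H * C := by
      calc Cᴴ * H = Cᴴ * Hᴴ := by rw [hHherm]
      _ = (H * C)ᴴ := by rw [Matrix.conjTranspose_mul]
      _ = H * C := hHCherm
    have cancel : ∀ X : Matrix (Fin (N + 1)) (Fin (N + 1)) ℝ,
        ⅟(Rᴴ) * (Rᴴ * X * R) * ⅟R = X := by
      intro X
      calc ⅟(Rᴴ) * (Rᴴ * X * R) * ⅟R = (⅟(Rᴴ) * Rᴴ) * X * (R * ⅟R) := by
            simp only [Matrix.mul_assoc]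
        _ = X := by rw [invOf_mul_self, mul_invOf_self, Matrix.one_mul, Matrix.mul_one]
    have hAherm : A.IsHermitian := by
      have h1 : Rᴴ * A * R = H * C := by
        rw [Matrix.mul_assoc, hAR, hR, Matrix.mul_assoc]
      have e1 : Rᴴ * (⅟R)ᴴ = 1 := by
        rw [← Matrix.conjTranspose_mul, invOf_mul_self, Matrix.conjTranspose_one]
      have h2 : Rᴴ * Aᴴ * R = H * C := by
        calc Rᴴ * Aᴴ * R = Rᴴ * ((⅟R)ᴴ * (Cᴴ * Rᴴ)) * R := by
              rw [hAdef, Matrix.conjTranspose_mul, Matrix.conjTranspose_mul]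
          _ = (Rᴴ * (⅟R)ᴴ) * (Cᴴ * (Rᴴ * R)) := by simp only [Matrix.mul_assoc]
          _ = Cᴴ * H := by rw [e1, Matrix.one_mul, ← hR]
          _ = H * C := hCH
      have key : Rᴴ * Aᴴ * R = Rᴴ * A * R := by rw [h1, h2]
      show Aᴴ = A
      calc Aᴴ = ⅟(Rᴴ) * (Rᴴ * Aᴴ * R) * ⅟R := (cancel Aᴴ).symm
        _ = ⅟(Rᴴ) * (Rᴴ * A * R) * ⅟R := by rw [key]
        _ = A := cancel A
    -- spectral theorem
    set U : Matrix (Fin (N + 1)) (Fin (N + 1)) ℝ :=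
      (Matrix.IsHermitian.eigenvectorUnitary hAherm : Matrix (Fin (N + 1)) (Fin (N + 1)) ℝ) with hU
    set d : Fin (N + 1) → ℝ := hAherm.eigenvalues with hd
    have hUst : star U * U = 1 :=
      Matrix.mem_unitaryGroup_iff'.mp (Matrix.IsHermitian.eigenvectorUnitary hAherm).2
    have hUts : U * star U = 1 :=
      Matrix.mem_unitaryGroup_iff.mp (Matrix.IsHermitian.eigenvectorUnitary hAherm).2
    have hspec : A = U * Matrix.diagonal d * star U := by
      have h := hAherm.spectral_theorem
      rwa [RCLike.ofReal_real_eq_id, Function.id_comp] at h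
    have hAk : ∀ k : ℕ, A ^ k = U * Matrix.diagonal (fun i => d i ^ k) * star U := by
      intro k
      induction k with
      | zero =>
        simp only [pow_zero]
        rw [show (Matrix.diagonal fun _ : Fin (N + 1) => (1:ℝ)) = 1 from Matrix.diagonal_one,
          Matrix.mul_one, hUts]
      | succ k ihk =>
        calc A ^ (k + 1) = A ^ k * A := pow_succ A k
          _ = (U * Matrix.diagonal (fun i => d i ^ k) * star U) *
              (U * Matrix.diagonal d * star U) := by rw [ihk, ← hspec]
          _ = U * (Matrix.diagonal (fun i => d i ^ k) * ((star U * U) * (Matrix.diagonal d * star U))) := by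
              simp only [Matrix.mul_assoc]
          _ = U * (Matrix.diagonal (fun i => d i ^ k) * Matrix.diagonal d) * star U := by
              rw [hUst, Matrix.one_mul]; simp only [Matrix.mul_assoc]
          _ = U * Matrix.diagonal (fun i => d i ^ (k + 1)) * star U := by
              rw [Matrix.diagonal_mul_diagonal]
              congr 2
    set w : Fin (N + 1) → ℝ := fun i => (star U * R) i 0 with hwdef
    have hsk : ∀ k : ℕ, s k = ∑ i, w i ^ 2 * d i ^ k := by
      intro k
      have hfac : H * C ^ k = (Rᴴ * U) * Matrix.diagonal (fun i => d i ^ k) * (star U * R) := by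
        rw [hR, Matrix.mul_assoc Rᴴ R (C ^ k), ← hAkR k, hAk k]
        simp only [Matrix.mul_assoc]
      have hPQ : ∀ i, (Rᴴ * U) 0 i = (star U * R) i 0 := by
        intro i
        rw [Matrix.mul_apply, Matrix.mul_apply]
        refine Finset.sum_congr rfl fun b _ => ?_
        rw [Matrix.conjTranspose_apply, Matrix.star_apply, star_trivial, star_trivial]
        ring
      rw [hs0 k, hfac, Matrix.mul_apply]
      refine Finset.sum_congr rfl fun i _ => ?_
      rw [Matrix.mul_diagonal, hPQ i]
      simp only [hwdef]
      ring
    -- orthonormality of columns of U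
    have horth : ∀ p q : Fin (N + 1), (∑ b, U b p * U b q) = if p = q then (1:ℝ) else 0 := by
      intro p q
      have h := congrFun (congrFun hUst p) q
      rw [Matrix.mul_apply] at h
      simp only [Matrix.star_apply, star_trivial] at h
      rw [← Matrix.one_apply (i := p) (j := q), ← h]
    -- rows of (columns of U) are eigenvectors
    have hrow : ∀ i : Fin (N + 1), (fun a => U a i) ᵥ* A = d i • (fun a => U a i) := by
      intro i
      have h1 : star U * A = Matrix.diagonal d * star U := by
        calc star U * A = (star U * U) * Matrix.diagonal d * star U := by
              rw [hspec]; simp only [Matrix.mul_assoc]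
          _ = Matrix.diagonal d * star U := by rw [hUst, Matrix.one_mul]
      funext a
      have h2 := congrFun (congrFun h1 i) a
      rw [Matrix.mul_apply, Matrix.diagonal_mul] at h2
      simp only [Matrix.star_apply, star_trivial] at h2
      simpa [Matrix.vecMul, dotProduct] using h2
    have hrowk : ∀ (i : Fin (N + 1)) (k : ℕ),
        (fun a => U a i) ᵥ* (A ^ k) = d i ^ k • (fun a => U a i) := by
      intro i k
      induction k with
      | zero => simp
      | succ k ihk =>
        rw [pow_succ, ← Matrix.vecMul_vecMul, ihk, Matrix.smul_vecMul, hrow, smul_smul, ← pow_succ]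
    set z : Fin (N + 1) → Fin (N + 1) → ℝ := fun i => (fun a => U a i) ᵥ* R with hzdef
    have hzC : ∀ (i : Fin (N + 1)) (k : ℕ), z i ᵥ* C ^ k = d i ^ k • z i := by
      intro i k
      rw [hzdef]
      simp only
      rw [Matrix.vecMul_vecMul, ← hAkR k, ← Matrix.vecMul_vecMul, hrowk, Matrix.smul_vecMul]
    -- the first column of powers of the companion matrix
    have hCk0 : ∀ (k : ℕ), k < N + 1 → ∀ b : Fin (N + 1),
        (C ^ k) b 0 = if (b : ℕ) = k then (1:ℝ) else 0 := by
      intro k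
      induction k with
      | zero =>
        intro _ b
        rw [pow_zero, Matrix.one_apply]
        simp only [Fin.ext_iff, Fin.val_zero]
      | succ k ihk =>
        intro hk b
        rw [pow_succ', Matrix.mul_apply]
        rw [Finset.sum_eq_single (⟨k, by omega⟩ : Fin (N + 1))]
        · rw [ihk (by omega), if_pos rfl, mul_one, hCdef]
          simp only [Matrix.of_apply, Fin.val_mk, if_pos hk]
        · intro e _ he
          rw [ihk (by omega), if_neg (fun hv => he (Fin.ext (by simpa using hv))), mul_zero]
        · intro hmem
          exact absurd (Finset.mem_univ _) hmem
    have hz0w : ∀ i : Fin (N + 1), z i 0 = w i := by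
      intro i
      rw [hzdef, hwdef]
      simp only [Matrix.vecMul, dotProduct, Matrix.mul_apply]
      refine Finset.sum_congr rfl fun b _ => ?_
      rw [Matrix.star_apply, star_trivial]
    have hz_val : ∀ (i : Fin (N + 1)) (k : ℕ) (hk : k < N + 1),
        z i ⟨k, hk⟩ = d i ^ k * w i := by
      intro i k hk
      have h1 := congrFun (hzC i k) 0
      have h2 : (z i ᵥ* C ^ k) 0 = z i ⟨k, hk⟩ := by
        rw [Matrix.vecMul]
        simp only [dotProduct]
        rw [Finset.sum_eq_single (⟨k, hk⟩ : Fin (N + 1))]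
        · rw [hCk0 k hk, if_pos rfl, mul_one]
        · intro b _ hb
          rw [hCk0 k hk, if_neg (fun hv => hb (Fin.ext (by simpa using hv))), mul_zero]
        · intro hmem
          exact absurd (Finset.mem_univ _) hmem
      rw [h2] at h1
      rw [h1]
      simp [hz0w i]
    have hz_all : ∀ (i : Fin (N + 1)) (a : Fin (N + 1)), z i a = d i ^ (a : ℕ) * w i := by
      intro i a
      have := hz_val i a.1 a.2
      rwa [Fin.eta] at this
    have hvecMulR_inj : ∀ v : Fin (N + 1) → ℝ, v ᵥ* R = 0 → v = 0 := by
      intro v hv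
      have : (v ᵥ* R) ᵥ* ⅟R = v := by
        rw [Matrix.vecMul_vecMul, mul_invOf_self, Matrix.vecMul_one]
      rw [hv, Matrix.zero_vecMul] at this
      exact this.symm
    have hwne : ∀ i, w i ≠ 0 := by
      intro i hwi
      have hz0 : z i = 0 := funext fun a => by rw [hz_all i a, hwi, mul_zero]; simp
      have hu0 : (fun a => U a i) = 0 := hvecMulR_inj _ hz0
      have h1 := horth i i
      rw [if_pos rfl] at h1
      have h2 : (∑ b, U b i * U b i) = 0 :=
        Finset.sum_eq_zero fun b _ => by simp [congrFun hu0 b]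
      rw [h2] at h1
      exact zero_ne_one h1
    have hdinj : Function.Injective d := by
      intro i j hij
      by_contra hne
      have hy : ((w j • fun a => U a i) - (w i • fun a => U a j)) ᵥ* R = 0 := by
        rw [Matrix.sub_vecMul, Matrix.smul_vecMul, Matrix.smul_vecMul]
        funext a
        simp only [Pi.sub_apply, Pi.smul_apply, smul_eq_mul, Pi.zero_apply]
        rw [show ((fun a => U a i) ᵥ* R) = z i from rfl, show ((fun a => U a j) ᵥ* R) = z j from rfl]
        rw [hz_all i a, hz_all j a, hij]
        ring
      have hy0 := hvecMulR_inj _ hy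
      have hptw : ∀ a, w j * U a i = w i * U a j := by
        intro a
        have := congrFun hy0 a
        simp only [Pi.sub_apply, Pi.smul_apply, smul_eq_mul, Pi.zero_apply] at this
        linarith
      have h1 : w j * (∑ b, U b i * U b i) = w i * (∑ b, U b j * U b i) := by
        rw [Finset.mul_sum, Finset.mul_sum]
        refine Finset.sum_congr rfl fun b _ => ?_
        rw [← mul_assoc, hptw b]
        ring
      rw [horth i i, if_pos rfl, horth j i, if_neg (fun h => hne h.symm)] at h1
      rw [mul_one, mul_zero] at h1
      exact hwne j h1
    -- sort the points
    set σ : Equiv.Perm (Fin (N + 1)) := Tuple.sort d with hσ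
    have hmono : Monotone (d ∘ σ) := Tuple.monotone_sort d
    refine ⟨d ∘ σ, fun j => w (σ j) ^ 2,
      hmono.strictMono_of_injective (hdinj.comp σ.injective), fun j => ?_, fun k => ?_⟩
    · exact lt_of_le_of_ne (sq_nonneg _) (Ne.symm (pow_ne_zero 2 (hwne (σ j))))
    · rw [hsk k, ← Equiv.sum_comp σ (fun i => w i ^ 2 * d i ^ k)]
      rfl
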